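/- Let C be a small ℂ-linear category and n ≥ 0. Define B₀ : CN^{n+1}(C) → CN^n(C) by (B₀φ)(f⁰⊗…⊗f^n) := φ(id_{X₀}⊗f⁰⊗…⊗f^n) − (−1)^{n+1} φ(f⁰⊗…⊗f^n⊗id_{X₀}), and B := A∘B₀ where A := 1 + λ_n + … + λ_n^n. Then the image of B : CN^{n+1}(C) → CN^n(C) is exactly C^n_λ(C) = Ker(1−λ_n). In particular, for every φ ∈ C^n_λ(C) there is ψ ∈ CN^{n+1}(C) with Bψ = 2(n+1)φ. -/

import Mathlib

open CategoryTheory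

noncomputable section

namespace CFM

universe v u

variable (C : Type u) [Category.{v} C]

/-- A composable chain of morphisms `(f⁰, f¹, …, fⁿ)` with `fⁱ : Xᵢ₊₁ ⟶ Xᵢ`;
`Chain C X Y` consists of chains with innermost source `X` and outermost target `Y`;
`f⁰` is the outermost morphism. -/
inductive Chain : C → C → Type (max u v)
  | single : {X Y : C} → (X ⟶ Y) → Chain X Y
  | cons : {X Y Z : C} → (Y ⟶ Z) → Chain X Y → Chain X Z

namespace Chain

variable {C}

/-- Number of morphisms in the chain. -/
def size : {X Y : C} → Chain C X Y → ℕ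
  | _, _, single _ => 1
  | _, _, cons _ c => c.size + 1

theorem one_le_size {X Y : C} (c : Chain C X Y) : 1 ≤ c.size := by
  induction c with
  | single f => simp [size]
  | cons f c ih => simp [size]

/-- Append a morphism at the inner end of a chain. -/
def snoc : {V X Y : C} → Chain C X Y → (V ⟶ X) → Chain C V Y
  | _, _, _, single f, g => cons f (single g)
  | _, _, _, cons f c, g => cons f (snoc c g)

/-- Compose the morphisms in slots `i` and `i+1` of the chain (`fⁱ ∘ fⁱ⁺¹`). -/
def composeAt : {X Y : C} → ℕ → Chain C X Y → Chain C X Y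
  | _, _, _, single f => single f
  | _, _, 0, cons f (single g) => single (g ≫ f)
  | _, _, 0, cons f (cons g c) => cons (g ≫ f) c
  | _, _, (i+1), cons f c => cons f (composeAt i c)

end Chain

/-- A cyclically composable tuple `(f⁰, …, fⁿ)`, i.e. an element of the cyclic nerve:
a chain from some object back to itself. -/
def CycChain := Σ X : C, Chain C X X

/-- A function on the cyclic nerve of `C`; an element of `CN^n(C)` is (the multilinear
extension of) such a function, evaluated on tuples of size `n+1`. -/
def Cochain := CycChain C → ℂ

variable {C}

/-- The inverse cyclic rotation `(f⁰, …, fⁿ) ↦ (f¹, …, fⁿ, f⁰)`. -/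
def rotInv : CycChain C → CycChain C
  | ⟨X, Chain.single f⟩ => ⟨X, Chain.single f⟩
  | ⟨_, Chain.cons f c⟩ => ⟨_, c.snoc f⟩

/-- The cyclic rotation `(f⁰, …, fⁿ) ↦ (fⁿ, f⁰, …, fⁿ⁻¹)`. -/
def rot (t : CycChain C) : CycChain C := rotInv^[t.2.size - 1] t

/-- The (unsigned) cyclic operator: `(τφ)(f⁰⊗…⊗fⁿ) = φ(fⁿ⊗f⁰⊗…⊗fⁿ⁻¹)`. -/
def tauOp (φ : Cochain C) : Cochain C := fun t => φ (rot t)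

/-- The signed cyclic operator `λₙ = (-1)ⁿ τₙ` on `CN^n(C)`. -/
def lamOp (n : ℕ) (φ : Cochain C) : Cochain C := fun t => (-1 : ℂ) ^ n * φ (rot t)

/-- The operator `A = 1 + λₙ + λₙ² + ⋯ + λₙⁿ` on `CN^n(C)`. -/
def AOp (n : ℕ) (φ : Cochain C) : Cochain C :=
  fun t => ∑ k ∈ Finset.range (n + 1), (-1 : ℂ) ^ (n * k) * φ (rot^[k] t)

/-- The Hochschild coboundary `b : CN^n(C) → CN^{n+1}(C)`:
`(bφ)(f⁰⊗…⊗fⁿ⁺¹) = Σᵢ (-1)ⁱ φ(f⁰⊗…⊗fⁱfⁱ⁺¹⊗…⊗fⁿ⁺¹) + (-1)ⁿ⁺¹ φ(fⁿ⁺¹f⁰⊗f¹⊗…⊗fⁿ)`. -/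
def bOp (n : ℕ) (φ : Cochain C) : Cochain C := fun t =>
  (∑ i ∈ Finset.range (n + 1), (-1 : ℂ) ^ i * φ ⟨t.1, Chain.composeAt i t.2⟩) +
    (-1 : ℂ) ^ (n + 1) * φ ⟨(rot t).1, Chain.composeAt 0 (rot t).2⟩

/-- The truncated Hochschild coboundary `b'` (the last, cyclic, face omitted). -/
def b'Op (n : ℕ) (φ : Cochain C) : Cochain C := fun t =>
  ∑ i ∈ Finset.range (n + 1), (-1 : ℂ) ^ i * φ ⟨t.1, Chain.composeAt i t.2⟩

/-- The operator `B₀ : CN^{n+1}(C) → CN^n(C)`: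
`(B₀φ)(f⁰⊗…⊗fⁿ) = φ(id⊗f⁰⊗…⊗fⁿ) - (-1)ⁿ⁺¹ φ(f⁰⊗…⊗fⁿ⊗id)`. -/
def B0Op (n : ℕ) (φ : Cochain C) : Cochain C := fun t =>
  φ ⟨t.1, Chain.cons (𝟙 t.1) t.2⟩ - (-1 : ℂ) ^ (n + 1) * φ ⟨t.1, t.2.snoc (𝟙 t.1)⟩

/-- Connes' operator `B = A ∘ B₀ : CN^{n+1}(C) → CN^n(C)`. -/
def BOp (n : ℕ) (φ : Cochain C) : Cochain C := AOp n (B0Op n φ)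

/-- Additivity and ℂ-homogeneity of a cochain in the outermost (0-th) slot. -/
def MultilinAt0 [Preadditive C] [CategoryTheory.Linear ℂ C] (φ : Cochain C) : Prop :=
  (∀ {X Y : C} (f g : Y ⟶ X) (c : Chain C X Y),
      φ ⟨X, Chain.cons (f + g) c⟩ = φ ⟨X, Chain.cons f c⟩ + φ ⟨X, Chain.cons g c⟩) ∧
  (∀ {X Y : C} (a : ℂ) (f : Y ⟶ X) (c : Chain C X Y),
      φ ⟨X, Chain.cons (a • f) c⟩ = a * φ ⟨X, Chain.cons f c⟩) ∧
  (∀ {X : C} (f g : X ⟶ X),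
      φ ⟨X, Chain.single (f + g)⟩ = φ ⟨X, Chain.single f⟩ + φ ⟨X, Chain.single g⟩) ∧
  (∀ {X : C} (a : ℂ) (f : X ⟶ X),
      φ ⟨X, Chain.single (a • f)⟩ = a * φ ⟨X, Chain.single f⟩)

/-- A function on the cyclic nerve is a genuine cochain (an element of the dual
`CN^•(C)` of the cyclic nerve) iff it is ℂ-multilinear in every slot. -/
def IsCochain [Preadditive C] [CategoryTheory.Linear ℂ C] (φ : Cochain C) : Prop :=
  ∀ k : ℕ, MultilinAt0 fun t => φ (rotInv^[k] t)

section Aux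

attribute [reducible] CycChain

namespace Chain

/-- Concatenation of chains, first chain at the outer end. -/
def append : {X Y Z : C} → Chain C Y Z → Chain C X Y → Chain C X Z
  | _, _, _, single f, d => cons f d
  | _, _, _, cons f c, d => cons f (append c d)

theorem snoc_eq_append {V X Y : C} (c : Chain C X Y) (g : V ⟶ X) :
    c.snoc g = append c (single g) := by
  induction c with
  | single f => simp [snoc, append]
  | cons f c ih => simp [snoc, append, ih]

theorem append_assoc {V W X Y : C} (c : Chain C X Y) (d : Chain C W X) (e : Chain C V W) :
    append (append c d) e = append c (append d e) := by
  induction c with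
  | single f => simp [append]
  | cons f c ih => simp [append, ih]

theorem snoc_append {V W X Y : C} (c : Chain C X Y) (d : Chain C W X) (g : V ⟶ W) :
    (append c d).snoc g = append c (d.snoc g) := by
  rw [snoc_eq_append, snoc_eq_append, append_assoc]

theorem size_append {W X Y : C} (c : Chain C X Y) (d : Chain C W X) :
    (append c d).size = c.size + d.size := by
  induction c with
  | single f => simp [append, size]; ring
  | cons f c ih => simp [append, size, ih]; ring

theorem size_snoc {V X Y : C} (c : Chain C X Y) (g : V ⟶ X) :
    (c.snoc g).size = c.size + 1 := by
  rw [snoc_eq_append, size_append]; simp [size]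

/-- Every chain is a `single` or a `snoc`. -/
theorem single_or_snoc {X Y : C} (c : Chain C X Y) :
    (∃ f : X ⟶ Y, c = single f) ∨
      ∃ (W : C) (d : Chain C W Y) (g : X ⟶ W), c = d.snoc g := by
  induction c with
  | single f => exact Or.inl ⟨f, rfl⟩
  | cons f c ih =>
    rcases ih with ⟨g, rfl⟩ | ⟨W, d, g, rfl⟩
    · exact Or.inr ⟨_, single f, g, by simp [snoc]⟩
    · exact Or.inr ⟨_, cons f d, g, by simp [snoc]⟩

/-- Insert an identity before the `r`-th slot (counted from the outside). -/
def insertAt : ℕ → {X Y : C} → Chain C X Y → Chain C X Y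
  | 0, _, _, c => Chain.cons (𝟙 _) c
  | (i+1), _, _, Chain.cons f c => Chain.cons f (insertAt i c)
  | (_+1), _, _, Chain.single f => Chain.cons (𝟙 _) (Chain.single f)

theorem snoc_insertAt {V X Y : C} (c : Chain C X Y) (g : V ⟶ X) :
    ∀ r : ℕ, r < c.size → (insertAt r c).snoc g = insertAt r (c.snoc g) := by
  induction c with
  | single f =>
    intro r hr
    have : r = 0 := by simpa [size] using hr
    subst this
    simp [insertAt, snoc]
  | cons f c ih =>
    intro r hr
    cases r with
    | zero => simp [insertAt, snoc]
    | succ r =>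
      have hr' : r < c.size := by simpa [size] using hr
      simp [insertAt, snoc, ih r hr']

theorem composeAt_snoc {V X Y : C} (c : Chain C X Y) (g : V ⟶ X) :
    ∀ r : ℕ, r + 2 ≤ c.size → composeAt r (c.snoc g) = (composeAt r c).snoc g := by
  induction c with
  | single f => intro r h; simp [size] at h
  | cons f c ih =>
    intro r h
    cases r with
    | zero =>
      cases c with
      | single e => simp [snoc, composeAt]
      | cons e d => simp [snoc, composeAt]
    | succ r =>
      have h' : r + 2 ≤ c.size := by simp [size] at h; omega
      simp [snoc, composeAt, ih r h']

end Chain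

open Chain

theorem rotInv_cons {X Y : C} (f : Y ⟶ X) (c : Chain C X Y) :
    rotInv (⟨X, Chain.cons f c⟩ : CycChain C) = ⟨Y, c.snoc f⟩ := rfl

theorem rotInv_single {X : C} (f : X ⟶ X) :
    rotInv (⟨X, Chain.single f⟩ : CycChain C) = ⟨X, Chain.single f⟩ := rfl

theorem rotInv_iter_single (k : ℕ) {X : C} (f : X ⟶ X) :
    rotInv^[k] (⟨X, Chain.single f⟩ : CycChain C) = ⟨X, Chain.single f⟩ := by
  induction k with
  | zero => rfl
  | succ k ih => rw [Function.iterate_succ_apply, rotInv_single, ih]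

theorem size_rotInv (t : CycChain C) : (rotInv t).2.size = t.2.size := by
  obtain ⟨X, c⟩ := t
  cases c with
  | single f => rfl
  | cons f c => simp [rotInv_cons, size_snoc, Chain.size]

theorem size_rotInv_iter (k : ℕ) (t : CycChain C) : (rotInv^[k] t).2.size = t.2.size := by
  induction k with
  | zero => rfl
  | succ k ih => rw [Function.iterate_succ_apply', size_rotInv, ih]

theorem rotInv_iter_append {X Y : C} (c : Chain C Y X) :
    ∀ d : Chain C X Y,
      rotInv^[c.size] (⟨X, Chain.append c d⟩ : CycChain C) = ⟨Y, Chain.append d c⟩ := by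
  induction c with
  | single f =>
    intro d
    simp only [Chain.size, Chain.append]
    rw [Function.iterate_one, rotInv_cons, snoc_eq_append]
  | cons f c ih =>
    intro d
    simp only [Chain.size, Chain.append]
    rw [Function.iterate_add_apply, Function.iterate_one, rotInv_cons, snoc_append,
      ih (d.snoc f), snoc_eq_append, append_assoc]
    simp only [Chain.append]

theorem rotInv_iter_size (t : CycChain C) : rotInv^[t.2.size] t = t := by
  obtain ⟨X, c⟩ := t
  cases c with
  | single f => exact rotInv_iter_single _ f
  | cons f c =>
    have hs : (⟨X, Chain.cons f c⟩ : CycChain C).2.size = c.size + 1 := by simp [Chain.size]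
    rw [hs]
    have h1 : (Chain.cons f c : Chain C X X) = Chain.append (Chain.single f) c := by
      simp [Chain.append]
    rw [h1, Function.iterate_add_apply]
    have h2 := rotInv_iter_append (Chain.single f) c
    simp only [Chain.size] at h2
    rw [h2]
    exact rotInv_iter_append c (Chain.single f)

theorem rotInv_iter_full_mul (t : CycChain C) (q : ℕ) : rotInv^[q * t.2.size] t = t := by
  induction q with
  | zero => simp
  | succ q ih =>
    rw [Nat.succ_mul, Function.iterate_add_apply, rotInv_iter_size, ih]

theorem rotInv_iter_mod (J : ℕ) (t : CycChain C) :
    rotInv^[J] t = rotInv^[J % t.2.size] t := by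
  conv_lhs => rw [← Nat.mod_add_div J t.2.size]
  rw [Function.iterate_add_apply, mul_comm, rotInv_iter_full_mul]

theorem rot_def (t : CycChain C) : rot t = rotInv^[t.2.size - 1] t := rfl

theorem size_rot (t : CycChain C) : (rot t).2.size = t.2.size := size_rotInv_iter _ _

theorem size_rot_iter (k : ℕ) (t : CycChain C) : (rot^[k] t).2.size = t.2.size := by
  induction k with
  | zero => rfl
  | succ k ih => rw [Function.iterate_succ_apply', size_rot, ih]

theorem rot_single {X : C} (f : X ⟶ X) :
    rot (⟨X, Chain.single f⟩ : CycChain C) = ⟨X, Chain.single f⟩ := by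
  rw [rot_def]; simp [Chain.size]

theorem rot_iter_single (k : ℕ) {X : C} (f : X ⟶ X) :
    rot^[k] (⟨X, Chain.single f⟩ : CycChain C) = ⟨X, Chain.single f⟩ := by
  induction k with
  | zero => rfl
  | succ k ih => rw [Function.iterate_succ_apply, rot_single, ih]

theorem rot_snoc {X V : C} (d : Chain C X V) (g : V ⟶ X) :
    rot (⟨V, d.snoc g⟩ : CycChain C) = ⟨X, Chain.cons g d⟩ := by
  show rotInv^[(d.snoc g).size - 1] (⟨V, d.snoc g⟩ : CycChain C) = _
  rw [size_snoc, Nat.add_sub_cancel, snoc_eq_append]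
  have := rotInv_iter_append d (Chain.single g)
  simpa [Chain.append] using this

theorem rot_iter_eq (k : ℕ) : ∀ t : CycChain C, rot^[k] t = rotInv^[k * (t.2.size - 1)] t := by
  induction k with
  | zero => intro t; simp
  | succ k ih =>
    intro t
    rw [Function.iterate_succ_apply, ih (rot t), size_rot, rot_def,
      ← Function.iterate_add_apply, Nat.succ_mul]

theorem rot_iter_full (t : CycChain C) : rot^[t.2.size] t = t := by
  rw [rot_iter_eq, mul_comm, rotInv_iter_full_mul]

/-- Add an identity at the outer end. -/
def consId (t : CycChain C) : CycChain C := ⟨t.1, Chain.cons (𝟙 t.1) t.2⟩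

/-- Add an identity at the inner end. -/
def snocId (t : CycChain C) : CycChain C := ⟨t.1, t.2.snoc (𝟙 t.1)⟩

/-- Compose the two outermost morphisms. -/
def comp0 (t : CycChain C) : CycChain C := ⟨t.1, Chain.composeAt 0 t.2⟩

theorem rotInv_consId (t : CycChain C) : rotInv (consId t) = snocId t := by
  obtain ⟨X, c⟩ := t; rfl

theorem rot_snocId (t : CycChain C) : rot (snocId t) = consId t := by
  obtain ⟨X, c⟩ := t
  exact rot_snoc c (𝟙 X)

theorem composeAt_zero_id {X : C} (c : Chain C X X) :
    Chain.composeAt 0 (Chain.cons (𝟙 X) c) = c := by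
  cases c with
  | single g => simp [Chain.composeAt]
  | cons g d => simp [Chain.composeAt]

theorem comp0_rot_snocId {X : C} (c : Chain C X X) :
    comp0 (rot (snocId ⟨X, c⟩)) = ⟨X, c⟩ := by
  rw [rot_snocId]
  show (⟨X, Chain.composeAt 0 (Chain.cons (𝟙 X) c)⟩ : CycChain C) = _
  rw [composeAt_zero_id]

theorem comp0_rot_consId {X : C} (c : Chain C X X) :
    comp0 (rot (consId ⟨X, c⟩)) = rot (⟨X, c⟩ : CycChain C) := by
  rcases single_or_snoc c with ⟨f, rfl⟩ | ⟨W, d, g, rfl⟩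
  · rw [show consId (⟨X, Chain.single f⟩ : CycChain C)
        = ⟨X, (Chain.single (𝟙 X)).snoc f⟩ by simp [consId, Chain.snoc], rot_snoc, rot_single]
    show (⟨X, Chain.single (𝟙 X ≫ f)⟩ : CycChain C) = _
    simp
  · rw [show consId (⟨X, d.snoc g⟩ : CycChain C)
        = ⟨X, (Chain.cons (𝟙 X) d).snoc g⟩ by simp [consId, Chain.snoc], rot_snoc, rot_snoc]
    show (⟨W, Chain.composeAt 0 (Chain.cons g (Chain.cons (𝟙 X) d))⟩ : CycChain C) = _
    simp [Chain.composeAt]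

theorem consId_rotInv_iter : ∀ (r : ℕ) (t : CycChain C), r < t.2.size →
    consId (rotInv^[r] t) = rotInv^[r] ⟨t.1, Chain.insertAt r t.2⟩ := by
  intro r
  induction r with
  | zero => intro t _; rfl
  | succ r ih =>
    intro t ht
    obtain ⟨X, c⟩ := t
    cases c with
    | single f => simp [Chain.size] at ht
    | cons f c =>
      have hc : r < c.size + 1 := by simp only [Chain.size] at ht; omega
      have ht' : r < (c.snoc f).size := by rw [size_snoc]; omega
      rw [Function.iterate_succ_apply, Function.iterate_succ_apply, rotInv_cons,
        ih ⟨_, c.snoc f⟩ ht']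
      rw [show Chain.insertAt (r+1) (Chain.cons f c) = Chain.cons f (Chain.insertAt r c) from rfl,
        rotInv_cons]
      rw [snoc_insertAt c f r (by simp only [Chain.size] at ht; omega)]

theorem comp0_rotInv_iter : ∀ (r : ℕ) (t : CycChain C), r + 1 < t.2.size →
    comp0 (rotInv^[r] t) = rotInv^[r] ⟨t.1, Chain.composeAt r t.2⟩ := by
  intro r
  induction r with
  | zero => intro t _; rfl
  | succ r ih =>
    intro t ht
    obtain ⟨X, c⟩ := t
    cases c with
    | single f => simp [Chain.size] at ht
    | cons f c =>
      have hc : r + 1 < c.size := by simp only [Chain.size] at ht; omega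
      have ht' : r + 1 < (c.snoc f).size := by rw [size_snoc]; omega
      rw [Function.iterate_succ_apply, Function.iterate_succ_apply, rotInv_cons,
        ih ⟨_, c.snoc f⟩ ht']
      rw [show Chain.composeAt (r+1) (Chain.cons f c) = Chain.cons f (Chain.composeAt r c) by cases c <;> simp [Chain.composeAt],
        rotInv_cons]
      rw [composeAt_snoc c f r (by omega)]

end Aux

section Multilin

open Chain

variable [Preadditive C] [CategoryTheory.Linear ℂ C]

theorem IsCochain.congr {χ₁ χ₂ : Cochain C} (h : ∀ t, χ₁ t = χ₂ t)
    (h2 : IsCochain χ₂) : IsCochain χ₁ := by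
  have he : χ₁ = χ₂ := funext h
  rw [he]; exact h2

theorem isCochain_add {χ₁ χ₂ : Cochain C} (h1 : IsCochain χ₁) (h2 : IsCochain χ₂) :
    IsCochain (fun t => χ₁ t + χ₂ t) := by
  intro k
  refine ⟨fun {X Y} f g c => ?_, fun {X Y} a f c => ?_, fun {X} f g => ?_, fun {X} a f => ?_⟩
  · have a1 := (h1 k).1 f g c; have a2 := (h2 k).1 f g c
    beta_reduce at a1 a2 ⊢; rw [a1, a2]; ring
  · have a1 := (h1 k).2.1 a f c; have a2 := (h2 k).2.1 a f c
    beta_reduce at a1 a2 ⊢; rw [a1, a2]; ring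
  · have a1 := (h1 k).2.2.1 f g; have a2 := (h2 k).2.2.1 f g
    beta_reduce at a1 a2 ⊢; rw [a1, a2]; ring
  · have a1 := (h1 k).2.2.2 a f; have a2 := (h2 k).2.2.2 a f
    beta_reduce at a1 a2 ⊢; rw [a1, a2]; ring

theorem isCochain_const_mul (b : ℂ) {χ : Cochain C} (h : IsCochain χ) :
    IsCochain (fun t => b * χ t) := by
  intro k
  refine ⟨fun {X Y} f g c => ?_, fun {X Y} a f c => ?_, fun {X} f g => ?_, fun {X} a f => ?_⟩
  · have a1 := (h k).1 f g c
    beta_reduce at a1 ⊢; rw [a1]; ring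
  · have a1 := (h k).2.1 a f c
    beta_reduce at a1 ⊢; rw [a1]; ring
  · have a1 := (h k).2.2.1 f g
    beta_reduce at a1 ⊢; rw [a1]; ring
  · have a1 := (h k).2.2.2 a f
    beta_reduce at a1 ⊢; rw [a1]; ring

theorem isCochain_sub {χ₁ χ₂ : Cochain C} (h1 : IsCochain χ₁) (h2 : IsCochain χ₂) :
    IsCochain (fun t => χ₁ t - χ₂ t) := by
  intro k
  refine ⟨fun {X Y} f g c => ?_, fun {X Y} a f c => ?_, fun {X} f g => ?_, fun {X} a f => ?_⟩
  · have a1 := (h1 k).1 f g c; have a2 := (h2 k).1 f g c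
    beta_reduce at a1 a2 ⊢; rw [a1, a2]; ring
  · have a1 := (h1 k).2.1 a f c; have a2 := (h2 k).2.1 a f c
    beta_reduce at a1 a2 ⊢; rw [a1, a2]; ring
  · have a1 := (h1 k).2.2.1 f g; have a2 := (h2 k).2.2.1 f g
    beta_reduce at a1 a2 ⊢; rw [a1, a2]; ring
  · have a1 := (h1 k).2.2.2 a f; have a2 := (h2 k).2.2.2 a f
    beta_reduce at a1 a2 ⊢; rw [a1, a2]; ring

theorem isCochain_sum (N : ℕ) (g : ℕ → Cochain C) (hg : ∀ i, IsCochain (g i)) :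
    IsCochain (fun t => ∑ i ∈ Finset.range N, g i t) := by
  induction N with
  | zero =>
    simp only [Finset.range_zero, Finset.sum_empty]
    intro k
    exact ⟨fun f g c => by simp, fun a f c => by simp, fun f g => by simp, fun a f => by simp⟩
  | succ N ih =>
    simp only [Finset.sum_range_succ]
    exact isCochain_add ih (hg N)

/-- Master lemma: if, on every shape, `F ∘ rotInv^[k]` can be put in a normal form
`rotInv^[k'] ∘ (chain with the varying morphism, linearly modified, in slot 0)`, then
precomposition with `F` preserves `IsCochain`. -/
theorem isCochain_comp {φ : Cochain C} (h : IsCochain φ) (F : CycChain C → CycChain C)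
    (hcons : ∀ (k : ℕ) (X Y : C) (c : Chain C X Y), ∃ k' : ℕ,
      (∃ (Z W : C) (d : Chain C W Z) (α : (Y ⟶ X) → (Z ⟶ W)),
        (∀ u v, α (u + v) = α u + α v) ∧ (∀ (a : ℂ) (u : Y ⟶ X), α (a • u) = a • α u) ∧
        ∀ u : Y ⟶ X, F (rotInv^[k] ⟨X, Chain.cons u c⟩) = rotInv^[k'] ⟨W, Chain.cons (α u) d⟩) ∨
      (∃ (W : C) (α : (Y ⟶ X) → (W ⟶ W)),
        (∀ u v, α (u + v) = α u + α v) ∧ (∀ (a : ℂ) (u : Y ⟶ X), α (a • u) = a • α u) ∧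
        ∀ u : Y ⟶ X, F (rotInv^[k] ⟨X, Chain.cons u c⟩) = rotInv^[k'] ⟨W, Chain.single (α u)⟩))
    (hsingle : ∀ (k : ℕ) (X : C), ∃ k' : ℕ,
      (∃ (Z W : C) (d : Chain C W Z) (α : (X ⟶ X) → (Z ⟶ W)),
        (∀ u v, α (u + v) = α u + α v) ∧ (∀ (a : ℂ) (u : X ⟶ X), α (a • u) = a • α u) ∧
        ∀ u : X ⟶ X, F (rotInv^[k] ⟨X, Chain.single u⟩) = rotInv^[k'] ⟨W, Chain.cons (α u) d⟩) ∨
      (∃ (W : C) (α : (X ⟶ X) → (W ⟶ W)),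
        (∀ u v, α (u + v) = α u + α v) ∧ (∀ (a : ℂ) (u : X ⟶ X), α (a • u) = a • α u) ∧
        ∀ u : X ⟶ X, F (rotInv^[k] ⟨X, Chain.single u⟩) = rotInv^[k'] ⟨W, Chain.single (α u)⟩)) :
    IsCochain (fun t => φ (F t)) := by
  intro k
  refine ⟨fun {X Y} f g c => ?_, fun {X Y} a f c => ?_, fun {X} f g => ?_, fun {X} a f => ?_⟩
  · rcases hcons k X Y c with ⟨k', ⟨Z, W, d, α, hadd, _, he⟩ | ⟨W, α, hadd, _, he⟩⟩
    · have key := (h k').1 (α f) (α g) d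
      beta_reduce at key ⊢
      simp only [he, hadd]
      exact key
    · have key := (h k').2.2.1 (α f) (α g)
      beta_reduce at key ⊢
      simp only [he, hadd]
      exact key
  · rcases hcons k X Y c with ⟨k', ⟨Z, W, d, α, _, hsm, he⟩ | ⟨W, α, _, hsm, he⟩⟩
    · have key := (h k').2.1 a (α f) d
      beta_reduce at key ⊢
      simp only [he, hsm]
      exact key
    · have key := (h k').2.2.2 a (α f)
      beta_reduce at key ⊢
      simp only [he, hsm]
      exact key
  · rcases hsingle k X with ⟨k', ⟨Z, W, d, α, hadd, _, he⟩ | ⟨W, α, hadd, _, he⟩⟩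
    · have key := (h k').1 (α f) (α g) d
      beta_reduce at key ⊢
      simp only [he, hadd]
      exact key
    · have key := (h k').2.2.1 (α f) (α g)
      beta_reduce at key ⊢
      simp only [he, hadd]
      exact key
  · rcases hsingle k X with ⟨k', ⟨Z, W, d, α, _, hsm, he⟩ | ⟨W, α, _, hsm, he⟩⟩
    · have key := (h k').2.1 a (α f) d
      beta_reduce at key ⊢
      simp only [he, hsm]
      exact key
    · have key := (h k').2.2.2 a (α f)
      beta_reduce at key ⊢
      simp only [he, hsm]
      exact key

theorem isCochain_comp_rotInv {φ : Cochain C} (h : IsCochain φ) :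
    IsCochain (fun t => φ (rotInv t)) := by
  refine isCochain_comp h rotInv
    (fun k X Y c => ⟨k + 1, Or.inl ⟨Y, X, c, id, fun _ _ => rfl, fun _ _ => rfl, fun u => ?_⟩⟩)
    (fun k X => ⟨k + 1, Or.inr ⟨X, id, fun _ _ => rfl, fun _ _ => rfl, fun u => ?_⟩⟩)
  · show rotInv (rotInv^[k] ⟨X, Chain.cons u c⟩) = rotInv^[k + 1] ⟨X, Chain.cons u c⟩
    exact (Function.iterate_succ_apply' rotInv k _).symm
  · show rotInv (rotInv^[k] ⟨X, Chain.single u⟩) = rotInv^[k + 1] ⟨X, Chain.single u⟩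
    exact (Function.iterate_succ_apply' rotInv k _).symm

theorem isCochain_comp_rot {φ : Cochain C} (h : IsCochain φ) :
    IsCochain (fun t => φ (rot t)) := by
  refine isCochain_comp h rot
    (fun k X Y c => ⟨c.size + k, Or.inl ⟨Y, X, c, id, fun _ _ => rfl, fun _ _ => rfl, fun u => ?_⟩⟩)
    (fun k X => ⟨0, Or.inr ⟨X, id, fun _ _ => rfl, fun _ _ => rfl, fun u => ?_⟩⟩)
  · show rot (rotInv^[k] ⟨X, Chain.cons u c⟩) = rotInv^[c.size + k] ⟨X, Chain.cons u c⟩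
    rw [rot_def, size_rotInv_iter]
    have hs : (⟨X, Chain.cons u c⟩ : CycChain C).2.size = c.size + 1 := by simp [Chain.size]
    rw [hs, Nat.add_sub_cancel, ← Function.iterate_add_apply]
  · show rot (rotInv^[k] ⟨X, Chain.single u⟩) = rotInv^[0] ⟨X, Chain.single u⟩
    rw [rotInv_iter_single, rot_single, Function.iterate_zero_apply]

theorem isCochain_comp_rot_iter (i : ℕ) :
    ∀ {φ : Cochain C}, IsCochain φ → IsCochain (fun t => φ (rot^[i] t)) := by
  induction i with
  | zero => intro φ h; exact IsCochain.congr (fun t => rfl) h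
  | succ i ih =>
    intro φ h
    exact IsCochain.congr (fun t => by rw [Function.iterate_succ_apply])
      (isCochain_comp_rot (ih h))

theorem isCochain_comp_consId {φ : Cochain C} (h : IsCochain φ) :
    IsCochain (fun t => φ (consId t)) := by
  refine isCochain_comp h consId (fun k X Y c => ?_)
    (fun k X => ⟨1, Or.inl ⟨X, X, Chain.single (𝟙 X), id,
      fun _ _ => rfl, fun _ _ => rfl, fun u => ?_⟩⟩)
  · cases hr : k % (c.size + 1) with
    | zero =>
      refine ⟨c.size + 1, Or.inl ⟨Y, X, c.snoc (𝟙 X), id,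
        fun _ _ => rfl, fun _ _ => rfl, fun u => ?_⟩⟩
      show consId (rotInv^[k] ⟨X, Chain.cons u c⟩)
          = rotInv^[c.size + 1] ⟨X, Chain.cons u (c.snoc (𝟙 X))⟩
      have hm : (⟨X, Chain.cons u c⟩ : CycChain C).2.size = c.size + 1 := by simp [Chain.size]
      rw [rotInv_iter_mod, hm, hr, Function.iterate_zero_apply]
      rw [show (⟨X, Chain.cons u (c.snoc (𝟙 X))⟩ : CycChain C)
          = snocId ⟨X, Chain.cons u c⟩ by simp [snocId, Chain.snoc]]
      rw [← rot_snocId ⟨X, Chain.cons u c⟩, rot_def]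
      have hsz : (snocId (⟨X, Chain.cons u c⟩ : CycChain C)).2.size = c.size + 2 := by
        simp [snocId, size_snoc, Chain.size]
      rw [hsz]
      norm_num
    | succ r' =>
      refine ⟨r' + 1, Or.inl ⟨Y, X, Chain.insertAt r' c, id,
        fun _ _ => rfl, fun _ _ => rfl, fun u => ?_⟩⟩
      show consId (rotInv^[k] ⟨X, Chain.cons u c⟩)
          = rotInv^[r' + 1] ⟨X, Chain.cons u (Chain.insertAt r' c)⟩
      have hm : (⟨X, Chain.cons u c⟩ : CycChain C).2.size = c.size + 1 := by simp [Chain.size]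
      have hlt : r' + 1 < (⟨X, Chain.cons u c⟩ : CycChain C).2.size := by
        rw [hm, ← hr]; exact Nat.mod_lt _ (by omega)
      rw [rotInv_iter_mod, hm, hr, consId_rotInv_iter (r' + 1) _ hlt]
      rfl
  · show consId (rotInv^[k] ⟨X, Chain.single u⟩)
        = rotInv^[1] ⟨X, Chain.cons u (Chain.single (𝟙 X))⟩
    rw [rotInv_iter_single, Function.iterate_one, rotInv_cons]
    simp [consId, Chain.snoc]

theorem isCochain_comp_comp0 {φ : Cochain C} (h : IsCochain φ) :
    IsCochain (fun t => φ (comp0 t)) := by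
  refine isCochain_comp h comp0 (fun k X Y c => ?_)
    (fun k X => ⟨0, Or.inr ⟨X, id, fun _ _ => rfl, fun _ _ => rfl, fun u => ?_⟩⟩)
  · cases hr : k % (c.size + 1) with
    | zero =>
      cases c with
      | single e =>
        refine ⟨0, Or.inr ⟨X, fun u => e ≫ u, fun u v => by simp [Preadditive.comp_add],
          fun a u => by simp [CategoryTheory.Linear.comp_smul], fun u => ?_⟩⟩
        show comp0 (rotInv^[k] ⟨X, Chain.cons u (Chain.single e)⟩)
            = rotInv^[0] ⟨X, Chain.single (e ≫ u)⟩
        have hm : (⟨X, Chain.cons u (Chain.single e)⟩ : CycChain C).2.size = 2 := by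
          simp [Chain.size]
        have hr2 : k % 2 = 0 := by simpa [Chain.size] using hr
        rw [rotInv_iter_mod, hm, hr2]
        simp [comp0, Chain.composeAt, Function.iterate_zero_apply]
      | cons e d =>
        refine ⟨0, Or.inl ⟨_, X, d, fun u => e ≫ u, fun u v => by simp [Preadditive.comp_add],
          fun a u => by simp [CategoryTheory.Linear.comp_smul], fun u => ?_⟩⟩
        show comp0 (rotInv^[k] ⟨X, Chain.cons u (Chain.cons e d)⟩)
            = rotInv^[0] ⟨X, Chain.cons (e ≫ u) d⟩
        have hm : (⟨X, Chain.cons u (Chain.cons e d)⟩ : CycChain C).2.size = d.size + 1 + 1 := by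
          simp [Chain.size]
        simp only [Chain.size] at hr
        rw [rotInv_iter_mod, hm, hr]
        simp [comp0, Chain.composeAt, Function.iterate_zero_apply]
    | succ r' =>
      by_cases hlast : r' + 1 = c.size
      · rcases single_or_snoc c with ⟨e, rfl⟩ | ⟨W, d, e, rfl⟩
        · refine ⟨0, Or.inr ⟨Y, fun u => u ≫ e, fun u v => by simp [Preadditive.add_comp],
            fun a u => by simp [CategoryTheory.Linear.smul_comp], fun u => ?_⟩⟩
          show comp0 (rotInv^[k] ⟨X, Chain.cons u (Chain.single e)⟩)
              = rotInv^[0] ⟨Y, Chain.single (u ≫ e)⟩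
          have hm : (⟨X, Chain.cons u (Chain.single e)⟩ : CycChain C).2.size = 2 := by
            simp [Chain.size]
          have hr2 : k % 2 = 1 := by
            simp only [Chain.size] at hr hlast; omega
          rw [rotInv_iter_mod, hm, hr2, Function.iterate_one, rotInv_cons]
          simp [comp0, Chain.composeAt, Chain.snoc]
        · refine ⟨0, Or.inl ⟨Y, W, d, fun u => u ≫ e, fun u v => by simp [Preadditive.add_comp],
            fun a u => by simp [CategoryTheory.Linear.smul_comp], fun u => ?_⟩⟩
          show comp0 (rotInv^[k] ⟨X, Chain.cons u (d.snoc e)⟩)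
              = rotInv^[0] ⟨W, Chain.cons (u ≫ e) d⟩
          have hm : (⟨X, Chain.cons u (d.snoc e)⟩ : CycChain C).2.size = d.size + 1 + 1 := by
            simp [Chain.size, size_snoc]
          rw [size_snoc] at hr hlast
          rw [hlast] at hr
          rw [rotInv_iter_mod, hm, hr]
          rw [show (⟨X, Chain.cons u (d.snoc e)⟩ : CycChain C)
              = ⟨X, (Chain.cons u d).snoc e⟩ by simp [Chain.snoc]]
          have h2 : rotInv^[d.size + 1] (⟨X, (Chain.cons u d).snoc e⟩ : CycChain C)
              = rot ⟨X, (Chain.cons u d).snoc e⟩ := by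
            rw [rot_def, size_snoc]
            simp [Chain.size]
          rw [h2, rot_snoc]
          simp [comp0, Chain.composeAt, Function.iterate_zero_apply]
      · refine ⟨r' + 1, Or.inl ⟨Y, X, Chain.composeAt r' c, id,
          fun _ _ => rfl, fun _ _ => rfl, fun u => ?_⟩⟩
        show comp0 (rotInv^[k] ⟨X, Chain.cons u c⟩)
            = rotInv^[r' + 1] ⟨X, Chain.cons u (Chain.composeAt r' c)⟩
        have hm : (⟨X, Chain.cons u c⟩ : CycChain C).2.size = c.size + 1 := by simp [Chain.size]
        have hlt : r' + 1 < c.size + 1 := by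
          have := Nat.mod_lt k (show 0 < c.size + 1 by omega)
          rw [hr] at this; exact this
        have hbound : r' + 1 + 1 < (⟨X, Chain.cons u c⟩ : CycChain C).2.size := by
          rw [hm]; omega
        rw [rotInv_iter_mod, hm, hr, comp0_rotInv_iter (r' + 1) _ hbound]
        cases c <;> simp [Chain.composeAt]
  · show comp0 (rotInv^[k] ⟨X, Chain.single u⟩) = rotInv^[0] ⟨X, Chain.single u⟩
    rw [rotInv_iter_single]
    simp [comp0, Chain.composeAt, Function.iterate_zero_apply]

theorem isCochain_B0Op (n : ℕ) {ψ : Cochain C} (h : IsCochain ψ) : IsCochain (B0Op n ψ) := by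
  have h1 : IsCochain (fun t => ψ (consId t)) := isCochain_comp_consId h
  have h2 : IsCochain (fun t => ψ (rotInv (consId t))) :=
    isCochain_comp_consId (isCochain_comp_rotInv h)
  have h3 : IsCochain (fun t => ψ (snocId t)) :=
    IsCochain.congr (fun t => by rw [rotInv_consId]) h2
  have h4 : IsCochain (fun t => ψ (consId t) - (-1 : ℂ) ^ (n + 1) * ψ (snocId t)) :=
    isCochain_sub h1 (isCochain_const_mul _ h3)
  exact IsCochain.congr (fun t => rfl) h4

theorem isCochain_AOp (n : ℕ) {χ : Cochain C} (h : IsCochain χ) : IsCochain (AOp n χ) :=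
  IsCochain.congr (fun t => rfl)
    (isCochain_sum (n + 1) (fun i t => (-1 : ℂ) ^ (n * i) * χ (rot^[i] t))
      (fun i => isCochain_const_mul _ (isCochain_comp_rot_iter i h)))

end Multilin

/-- The image of `B = A ∘ B₀ : CN^{n+1}(C) → CN^n(C)` is exactly
`C^n_λ(C) = Ker(1 - λₙ)`:  every `Bψ` is a cyclic cochain, and conversely for every
cyclic `φ ∈ C^n_λ(C)` there is `ψ ∈ CN^{n+1}(C)` with `Bψ = 2(n+1)φ`
(so in particular `φ ∈ Im B`). -/
theorem image_B_eq_cyclic [Preadditive C] [CategoryTheory.Linear ℂ C] (n : ℕ) :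
    -- `Im B ⊆ C^n_λ(C)`:
    (∀ ψ : Cochain C, ∀ t : CycChain C, t.2.size = n + 1 →
        lamOp n (BOp n ψ) t = BOp n ψ t) ∧
    (∀ ψ : Cochain C, IsCochain ψ → IsCochain (BOp n ψ)) ∧
    -- `C^n_λ(C) ⊆ Im B`, with `Bψ = 2(n+1)φ`:
    (∀ φ : Cochain C, IsCochain φ →
      (∀ t : CycChain C, t.2.size = n + 1 → lamOp n φ t = φ t) →
      ∃ ψ : Cochain C, IsCochain ψ ∧
        ∀ t : CycChain C, t.2.size = n + 1 →
          BOp n ψ t = 2 * ((n : ℂ) + 1) * φ t) := by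
  have hsq : ∀ m : ℕ, ((-1 : ℂ)) ^ m * ((-1 : ℂ)) ^ m = 1 := by
    intro m
    rw [← pow_add, ← two_mul, pow_mul]
    norm_num
  refine ⟨?_, ?_, ?_⟩
  · -- Part 1: every `Bψ` is cyclic
    intro ψ t ht
    set g : ℕ → ℂ := fun k => (-1 : ℂ) ^ (n * k) * B0Op n ψ (rot^[k] t) with hg
    have e1 : lamOp n (BOp n ψ) t = ∑ k ∈ Finset.range (n + 1), g (k + 1) := by
      simp only [lamOp, BOp, AOp, hg]
      rw [Finset.mul_sum]
      refine Finset.sum_congr rfl fun k _ => ?_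
      rw [← Function.iterate_succ_apply rot k t, ← mul_assoc, ← pow_add]
      have : n + n * k = n * (k + 1) := by ring
      rw [this]
    have e2 : BOp n ψ t = ∑ k ∈ Finset.range (n + 1), g k := by
      simp only [BOp, AOp, hg]
    have e3 : g (n + 1) = g 0 := by
      have hfull : rot^[n + 1] t = t := by
        have h0 := rot_iter_full t
        rw [ht] at h0
        exact h0
      simp only [hg]
      rw [hfull, Even.neg_one_pow (Nat.even_mul_succ_self n)]
      simp
    rw [e1, e2]
    have h4 := Finset.sum_range_succ' g (n + 1)
    have h5 := Finset.sum_range_succ g (n + 1)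
    rw [e3] at h5
    exact add_right_cancel (h4.symm.trans h5)
  · -- Part 2: `B` preserves cochains
    intro ψ h
    exact isCochain_AOp n (isCochain_B0Op n h)
  · -- Part 3: cyclic cochains are in the image of `B`
    intro φ hφ hcyc
    refine ⟨fun s => (-1 : ℂ) ^ n * φ (comp0 (rot s)), ?_, ?_⟩
    · exact isCochain_const_mul _ (isCochain_comp_rot (isCochain_comp_comp0 hφ))
    · intro t ht
      have hrot : ∀ u : CycChain C, u.2.size = n + 1 → φ (rot u) = (-1 : ℂ) ^ n * φ u := by
        intro u hu
        have hcu := hcyc u hu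
        simp only [lamOp] at hcu
        linear_combination ((-1 : ℂ) ^ n) * hcu - φ (rot u) * hsq n
      have hB0 : ∀ s : CycChain C, s.2.size = n + 1 →
          B0Op n (fun s => (-1 : ℂ) ^ n * φ (comp0 (rot s))) s = 2 * φ s := by
        intro s hs
        obtain ⟨X, c⟩ := s
        show (-1 : ℂ) ^ n * φ (comp0 (rot ⟨X, Chain.cons (𝟙 X) c⟩))
            - (-1 : ℂ) ^ (n + 1) * ((-1 : ℂ) ^ n * φ (comp0 (rot ⟨X, c.snoc (𝟙 X)⟩)))
            = 2 * φ ⟨X, c⟩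
        have e1 : comp0 (rot (⟨X, Chain.cons (𝟙 X) c⟩ : CycChain C)) = rot ⟨X, c⟩ := by
          rw [show (⟨X, Chain.cons (𝟙 X) c⟩ : CycChain C) = consId ⟨X, c⟩ from rfl]
          exact comp0_rot_consId c
        have e2 : comp0 (rot (⟨X, c.snoc (𝟙 X)⟩ : CycChain C)) = ⟨X, c⟩ := by
          rw [show (⟨X, c.snoc (𝟙 X)⟩ : CycChain C) = snocId ⟨X, c⟩ from rfl]
          exact comp0_rot_snocId c
        rw [e1, e2, hrot ⟨X, c⟩ hs, pow_succ]
        linear_combination (2 : ℂ) * φ ⟨X, c⟩ * hsq n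
      simp only [BOp, AOp]
      have hterm : ∀ k : ℕ,
          (-1 : ℂ) ^ (n * k) * B0Op n (fun s => (-1 : ℂ) ^ n * φ (comp0 (rot s))) (rot^[k] t)
            = 2 * φ t := by
        intro k
        rw [hB0 (rot^[k] t) (by rw [size_rot_iter, ht])]
        have hk : φ (rot^[k] t) = (-1 : ℂ) ^ (n * k) * φ t := by
          induction k with
          | zero => simp
          | succ k ihk =>
            rw [Function.iterate_succ_apply', hrot (rot^[k] t) (by rw [size_rot_iter, ht]),
              ihk, ← mul_assoc, ← pow_add]
            have : n + n * k = n * (k + 1) := by ring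
            rw [this]
        rw [hk]
        linear_combination 2 * φ t * hsq (n * k)
      rw [Finset.sum_congr rfl fun k _ => hterm k, Finset.sum_const, Finset.card_range,
        nsmul_eq_mul]
      push_cast
      ring

end CFM
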